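/- For every execution ρ of an event-driven program and all get events g₁, g₂ of the same handler in the induced trace τ(ρ): if g₁ qo g₂ then g₁ eo g₂. In particular, τ(ρ) contains no pair of get events g₁, g₂ with g₁ qo g₂ and g₂ hb g₁. -/

import Mathlib

/-!
Common framework for event-driven (ED) traces.

Handlers, shared variables and values are modelled as natural numbers;
events are (abstract) natural-number identifiers carrying a label.
-/

/-- Labels of events of event-driven programs: a read `⟨h,read,x⟩`, a write
`⟨h,write,x,v⟩`, a post `⟨h,post,h′⟩` or a get `⟨h,get⟩` of a handler `h`. -/
inductive EventLabel : Type where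
  | read  (h x : ℕ)
  | write (h x v : ℕ)
  | post  (h h' : ℕ)
  | get   (h : ℕ)
deriving DecidableEq

/-- The six basic relations of an ED trace. -/
inductive EDRel : Type where
  | po | rf | co | pb | mo | eo
deriving DecidableEq

/-- The handler of an event. -/
def EventLabel.hnd : EventLabel → ℕ
  | .read h _    => h
  | .write h _ _ => h
  | .post h _    => h
  | .get h       => h

def EventLabel.IsGet (l : EventLabel) : Prop := ∃ h, l = .get h
def EventLabel.IsPost (l : EventLabel) : Prop := ∃ h h', l = .post h h'
/-- `l` is a write event on variable `x`. -/
def EventLabel.IsWriteTo (l : EventLabel) (x : ℕ) : Prop := ∃ h v, l = .write h x v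
/-- `l` is a read event on variable `x`. -/
def EventLabel.IsReadOf (l : EventLabel) (x : ℕ) : Prop := ∃ h, l = .read h x
/-- `l` is a post event posting to handler `h'`. -/
def EventLabel.PostsTo (l : EventLabel) (h' : ℕ) : Prop := ∃ h, l = .post h h'

/-- An event-driven trace: a finite set `E` of events (natural-number
identifiers), a labelling of events, and a family of labelled edges. -/
structure EDTrace : Type where
  E : Finset ℕ
  lbl : ℕ → EventLabel
  rel : EDRel → ℕ → ℕ → Prop

namespace EDTrace

/-- The from-read relation `fr = rf⁻¹ ; co`. -/
def fr (τ : EDTrace) (a b : ℕ) : Prop := ∃ w, τ.rel .rf w a ∧ τ.rel .co w b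

/-- The queue order `qo = pb⁻¹ ; mo ; pb` on get events. -/
def qo (τ : EDTrace) (a b : ℕ) : Prop :=
  ∃ p q, τ.rel .pb p a ∧ τ.rel .pb q b ∧ τ.rel .mo p q

/-- `e` belongs to the (non-initial) message whose get event is `g`:
`g` is a get event and `e` is po-reachable from `g`. -/
def InMsg (τ : EDTrace) (g e : ℕ) : Prop :=
  (τ.lbl g).IsGet ∧ Relation.ReflTransGen (τ.rel .po) g e

/-- `eo†`: every event of a message is related to every event of an
eo-later message of the same handler. -/
def eoDag (τ : EDTrace) (a b : ℕ) : Prop :=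
  ∃ g g', τ.InMsg g a ∧ τ.InMsg g' b ∧ τ.rel .eo g g'

/-- One step of the happens-before relation:
`po ∪ rf ∪ fr ∪ co ∪ pb ∪ mo ∪ eo† ∪ qo`. -/
def step (τ : EDTrace) (a b : ℕ) : Prop :=
  τ.rel .po a b ∨ τ.rel .rf a b ∨ τ.fr a b ∨ τ.rel .co a b ∨
  τ.rel .pb a b ∨ τ.rel .mo a b ∨ τ.eoDag a b ∨ τ.qo a b

/-- The happens-before relation: transitive closure of
`po ∪ rf ∪ fr ∪ co ∪ pb ∪ mo ∪ eo† ∪ qo`. -/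
def hb (τ : EDTrace) : ℕ → ℕ → Prop := Relation.TransGen τ.step

/-- Axiomatic consistency: acyclicity of `po ∪ rf ∪ fr ∪ co ∪ pb ∪ mo ∪ eo† ∪ qo`. -/
def Consistent (τ : EDTrace) : Prop := ∀ e, ¬ τ.hb e e

/-- `e` belongs to the initial message of its handler: it belongs to no
message started by a get event. -/
def InInit (τ : EDTrace) (e : ℕ) : Prop :=
  e ∈ τ.E ∧ ¬ ∃ g ∈ τ.E, τ.InMsg g e

/-- Two events belong to the same message (either the message of a common
get event, or both to the initial message of the same handler). -/
def SameMsg (τ : EDTrace) (a b : ℕ) : Prop :=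
  (∃ g ∈ τ.E, τ.InMsg g a ∧ τ.InMsg g b) ∨
  (τ.InInit a ∧ τ.InInit b ∧ (τ.lbl a).hnd = (τ.lbl b).hnd)

/-- Well-formedness of the `po, rf, co, pb` components of a trace. -/
structure WFCore (τ : EDTrace) : Prop where
  edges_mem : ∀ r a b, τ.rel r a b → a ∈ τ.E ∧ b ∈ τ.E
  po_trans : Transitive (τ.rel .po)
  po_irrefl : ∀ a, ¬ τ.rel .po a a
  po_same_handler : ∀ a b, τ.rel .po a b → (τ.lbl a).hnd = (τ.lbl b).hnd
  po_msg : ∀ a b, τ.rel .po a b → τ.SameMsg a b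
  po_total : ∀ a ∈ τ.E, ∀ b ∈ τ.E, τ.SameMsg a b → a ≠ b →
    τ.rel .po a b ∨ τ.rel .po b a
  rf_lbl : ∀ a b, τ.rel .rf a b → ∃ x, (τ.lbl a).IsWriteTo x ∧ (τ.lbl b).IsReadOf x
  rf_unique : ∀ b ∈ τ.E, (∃ x, (τ.lbl b).IsReadOf x) → ∃! a, τ.rel .rf a b
  co_lbl : ∀ a b, τ.rel .co a b → ∃ x, (τ.lbl a).IsWriteTo x ∧ (τ.lbl b).IsWriteTo x
  co_trans : Transitive (τ.rel .co)
  co_irrefl : ∀ a, ¬ τ.rel .co a a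
  co_total : ∀ x, ∀ a ∈ τ.E, ∀ b ∈ τ.E, (τ.lbl a).IsWriteTo x → (τ.lbl b).IsWriteTo x →
    a ≠ b → τ.rel .co a b ∨ τ.rel .co b a
  pb_lbl : ∀ a b, τ.rel .pb a b → ∃ h h', τ.lbl a = .post h h' ∧ τ.lbl b = .get h'
  pb_get : ∀ b ∈ τ.E, (τ.lbl b).IsGet → ∃! a, τ.rel .pb a b
  pb_post : ∀ a ∈ τ.E, (τ.lbl a).IsPost → ∃! b, τ.rel .pb a b

/-- Well-formedness of a (total) ED trace: additionally `mo` totally orders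
the posts to each handler and `eo` totally orders the gets of each handler. -/
structure WF (τ : EDTrace) extends WFCore τ : Prop where
  mo_lbl : ∀ a b, τ.rel .mo a b → ∃ h', (τ.lbl a).PostsTo h' ∧ (τ.lbl b).PostsTo h'
  mo_trans : Transitive (τ.rel .mo)
  mo_irrefl : ∀ a, ¬ τ.rel .mo a a
  mo_total : ∀ h', ∀ a ∈ τ.E, ∀ b ∈ τ.E, (τ.lbl a).PostsTo h' → (τ.lbl b).PostsTo h' →
    a ≠ b → τ.rel .mo a b ∨ τ.rel .mo b a
  eo_lbl : ∀ a b, τ.rel .eo a b → ∃ h, τ.lbl a = .get h ∧ τ.lbl b = .get h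
  eo_trans : Transitive (τ.rel .eo)
  eo_irrefl : ∀ a, ¬ τ.rel .eo a a
  eo_total : ∀ h, ∀ a ∈ τ.E, ∀ b ∈ τ.E, τ.lbl a = .get h → τ.lbl b = .get h →
    a ≠ b → τ.rel .eo a b ∨ τ.rel .eo b a

/-- A partial trace: the `eo` and `mo` components are omitted (empty). -/
def IsPartial (τ : EDTrace) : Prop :=
  (∀ a b, ¬ τ.rel .eo a b) ∧ (∀ a b, ¬ τ.rel .mo a b)

/-- `τ'` extends the (partial) trace `τ`: same events, labels and
`po, rf, co, pb` edges; only `eo` and `mo` may be added. -/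
def Extends (τ' τ : EDTrace) : Prop :=
  τ'.E = τ.E ∧ τ'.lbl = τ.lbl ∧ τ'.rel .po = τ.rel .po ∧ τ'.rel .rf = τ.rel .rf ∧
  τ'.rel .co = τ.rel .co ∧ τ'.rel .pb = τ.rel .pb

/-- ED-consistency of a partial trace: it can be extended, by adding `eo`
edges (total per handler) and `mo` edges (total per target handler), to a
well-formed axiomatically consistent trace. -/
def EDConsistent (τ : EDTrace) : Prop :=
  ∃ τ' : EDTrace, Extends τ' τ ∧ τ'.WF ∧ τ'.Consistent

end EDTrace
/-!
Operational semantics of event-driven programs: handler threads with FIFO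
mailboxes, shared variables under sequential consistency, and messages whose
instructions are executed sequentially; `post` enqueues a message at the tail
of the target handler's mailbox, `get` dequeues the message at the head.
-/

/-- Instructions of a message: reads and writes of shared variables, and
posting of a (nested) message to a handler's mailbox. -/
inductive Instr : Type where
  | read  (x : ℕ)
  | write (x v : ℕ)
  | post  (h' : ℕ) (m : List Instr)

/-- A message is a sequence of instructions. -/
abbrev Msg := List Instr

/-- An event-driven program: finitely many handler threads, each with an
initial message. -/
structure Program : Type where
  numHandlers : ℕ
  init : ℕ → Msg

/-- A configuration: shared memory, per handler the currently executing
message (its identifier and remaining instructions), the FIFO mailbox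
(head = front of the queue) and a supply of fresh message identifiers. -/
structure Config : Type where
  mem  : ℕ → ℕ
  cur  : ℕ → Option (ℕ × Msg)
  mbox : ℕ → List (ℕ × Msg)
  fresh : ℕ

/-- A run event: its label together with the identifier of the message it
belongs to and, for post events, the identifier of the posted message. -/
structure REvent : Type where
  lbl : EventLabel
  mid : ℕ
  posted : ℕ

/-- Small-step transitions of event-driven programs, labelled by events. -/
inductive Step : Config → REvent → Config → Prop where
  | read (c : Config) (h mid x : ℕ) (rest : Msg) :
      c.cur h = some (mid, .read x :: rest) →
      Step c ⟨.read h x, mid, 0⟩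
        { c with cur := Function.update c.cur h (some (mid, rest)) }
  | write (c : Config) (h mid x v : ℕ) (rest : Msg) :
      c.cur h = some (mid, .write x v :: rest) →
      Step c ⟨.write h x v, mid, 0⟩
        { c with mem := Function.update c.mem x v,
                 cur := Function.update c.cur h (some (mid, rest)) }
  | post (c : Config) (h mid h' : ℕ) (m : Msg) (rest : Msg) :
      c.cur h = some (mid, .post h' m :: rest) →
      Step c ⟨.post h h', mid, c.fresh⟩
        { c with cur := Function.update c.cur h (some (mid, rest)),
                 mbox := Function.update c.mbox h' (c.mbox h' ++ [(c.fresh, m)]),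
                 fresh := c.fresh + 1 }
  | get (c : Config) (h mid mid' : ℕ) (m : Msg) (q : List (ℕ × Msg)) :
      c.cur h = some (mid, []) →
      c.mbox h = (mid', m) :: q →
      Step c ⟨.get h, mid', 0⟩
        { c with cur := Function.update c.cur h (some (mid', m)),
                 mbox := Function.update c.mbox h q }

/-- The initial configuration of a program: all variables 0, every handler
executing its initial message, all mailboxes empty. -/
def initConfig (P : Program) : Config where
  mem := fun _ => 0
  cur := fun h => if h < P.numHandlers then some (h, P.init h) else none
  mbox := fun _ => []
  fresh := P.numHandlers

/-- Multi-step executions producing a sequence of events. -/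
inductive Steps : Config → List REvent → Config → Prop where
  | nil (c : Config) : Steps c [] c
  | cons {c c' c'' : Config} {e : REvent} {l : List REvent} :
      Step c e c' → Steps c' l c'' → Steps c (e :: l) c''

/-- `ρ` is an execution of the program `P`. -/
def IsExec (P : Program) (ρ : List REvent) : Prop :=
  ∃ c, Steps (initConfig P) ρ c

/-- The event of `ρ` at position `i`. -/
def evAt (ρ : List REvent) (i : ℕ) : REvent := ρ.getD i ⟨.get 0, 0, 0⟩

/-- The trace `τ(ρ)` induced by an execution `ρ`: events are the positions of
`ρ`, and the relations `po, rf, co, pb, mo, eo` are determined by the order of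
execution in `ρ`. -/
def traceOf (ρ : List REvent) : EDTrace where
  E := Finset.range ρ.length
  lbl := fun i => (evAt ρ i).lbl
  rel := fun r a b =>
    a < b ∧ b < ρ.length ∧
    match r with
    | .po => (evAt ρ a).mid = (evAt ρ b).mid
    | .rf => ∃ x, (evAt ρ a).lbl.IsWriteTo x ∧ (evAt ρ b).lbl.IsReadOf x ∧
        ∀ j, a < j → j < b → ¬ (evAt ρ j).lbl.IsWriteTo x
    | .co => ∃ x, (evAt ρ a).lbl.IsWriteTo x ∧ (evAt ρ b).lbl.IsWriteTo x
    | .pb => (evAt ρ a).lbl.IsPost ∧ (evAt ρ b).lbl.IsGet ∧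
        (evAt ρ a).posted = (evAt ρ b).mid
    | .mo => ∃ h', (evAt ρ a).lbl.PostsTo h' ∧ (evAt ρ b).lbl.PostsTo h'
    | .eo => ∃ h, (evAt ρ a).lbl = .get h ∧ (evAt ρ b).lbl = .get h

namespace Statement3Aux

/-! ### Basic list extraction functions -/

/-- The mids of get events of handler `h`, in execution order. -/
def getKey (h : ℕ) (e : REvent) : Option ℕ :=
  if e.lbl = EventLabel.get h then some e.mid else none

def getsOf (h : ℕ) (l : List REvent) : List ℕ := l.filterMap (getKey h)

/-- The posted mids of post events to handler `h`, in execution order. -/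
def postKey (h : ℕ) (e : REvent) : Option ℕ :=
  match e.lbl with
  | .post _ h' => if h' = h then some e.posted else none
  | _ => none

def postsTo (h : ℕ) (l : List REvent) : List ℕ := l.filterMap (postKey h)

@[simp] lemma evAt_cons_zero (e : REvent) (l : List REvent) : evAt (e :: l) 0 = e := rfl
@[simp] lemma evAt_cons_succ (e : REvent) (l : List REvent) (n : ℕ) :
    evAt (e :: l) (n + 1) = evAt l n := rfl

/-! ### Freshness lemmas -/

lemma step_fresh_le {c e c'} (hs : Step c e c') : c.fresh ≤ c'.fresh := by
  cases hs <;> simp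

lemma steps_fresh_le {c l c'} (hs : Steps c l c') : c.fresh ≤ c'.fresh := by
  induction hs with
  | nil => exact le_refl _
  | cons h1 h2 ih => exact le_trans (step_fresh_le h1) ih

lemma step_post_inv {c e c'} (hs : Step c e c') (hp : e.lbl.IsPost) :
    e.posted = c.fresh ∧ c'.fresh = c.fresh + 1 := by
  obtain ⟨h, h', hl⟩ := hp
  cases hs <;> simp_all [EventLabel.IsPost]

lemma posted_ge {c l c'} (hs : Steps c l c') :
    ∀ i < l.length, (evAt l i).lbl.IsPost → c.fresh ≤ (evAt l i).posted := by
  induction hs with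
  | nil => intro i hi; simp at hi
  | cons h1 h2 ih =>
    intro i hi hp
    cases i with
    | zero =>
      simp only [evAt_cons_zero] at hp ⊢
      exact le_of_eq ((step_post_inv h1) hp).1.symm
    | succ n =>
      simp only [evAt_cons_succ] at hp ⊢
      exact le_trans (step_fresh_le h1) (ih n (by simpa using hi) hp)

lemma posted_lt {c l c'} (hs : Steps c l c') :
    ∀ i j, i < j → j < l.length → (evAt l i).lbl.IsPost → (evAt l j).lbl.IsPost →
      (evAt l i).posted < (evAt l j).posted := by
  induction hs with
  | nil => intro i j _ hj; simp at hj
  | cons h1 h2 ih =>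
    intro i j hij hj hpi hpj
    cases j with
    | zero => omega
    | succ m =>
      cases i with
      | zero =>
        simp only [evAt_cons_zero] at hpi ⊢
        simp only [evAt_cons_succ] at hpj ⊢
        have h0 := (step_post_inv h1) hpi
        have hm := posted_ge h2 m (by simpa using hj) hpj
        omega
      | succ n =>
        simp only [evAt_cons_succ] at hpi hpj ⊢
        exact ih n m (by omega) (by simpa using hj) hpi hpj

/-! ### FIFO invariant -/

lemma fifo {c l c'} (hs : Steps c l c') (h : ℕ) :
    getsOf h l ++ (c'.mbox h).map Prod.fst
      = (c.mbox h).map Prod.fst ++ postsTo h l := by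
  induction hs with
  | nil => simp [getsOf, postsTo]
  | cons h1 h2 ih =>
    cases h1 with
    | read h0 mid x rest hc =>
      simpa [getsOf, postsTo, getKey, postKey, List.filterMap_cons] using ih
    | write h0 mid x v rest hc =>
      simpa [getsOf, postsTo, getKey, postKey, List.filterMap_cons] using ih
    | post h0 mid h' m rest hc =>
      by_cases hh : h' = h
      · subst hh
        have ih' := ih
        simp only [Function.update_self, getsOf, postsTo] at ih'
        simpa [getsOf, postsTo, getKey, postKey, List.filterMap_cons] using ih'
      · have ih' := ih
        simp only [Function.update_of_ne (Ne.symm hh), getsOf, postsTo] at ih'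
        simpa [getsOf, postsTo, getKey, postKey, List.filterMap_cons, hh] using ih'
    | get h0 mid mid' m q hc hq =>
      by_cases hh : h0 = h
      · subst hh
        have ih' := ih
        simp only [Function.update_self, getsOf, postsTo] at ih'
        simp [getsOf, postsTo, getKey, postKey, List.filterMap_cons, hq, ih']
      · have ih' := ih
        simp only [Function.update_of_ne (Ne.symm hh), getsOf, postsTo] at ih'
        simpa [getsOf, postsTo, getKey, postKey, List.filterMap_cons, hh] using ih'

lemma postsTo_cons_post (h h0 h' mid p : ℕ) (l : List REvent) :
    postsTo h (⟨EventLabel.post h0 h', mid, p⟩ :: l) =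
      if h' = h then p :: postsTo h l else postsTo h l := by
  by_cases hh : h' = h <;> simp [postsTo, postKey, List.filterMap_cons, hh]

lemma posts_chain {c l c'} (hs : Steps c l c') (h : ℕ) :
    (∀ m ∈ postsTo h l, c.fresh ≤ m) ∧ (postsTo h l).Chain' (· < ·) := by
  induction hs with
  | nil => simp [postsTo]; exact List.isChain_nil
  | cons h1 h2 ih =>
    cases h1 with
    | read h0 mid x rest hc =>
      simpa [postsTo, postKey, List.filterMap_cons] using ih
    | write h0 mid x v rest hc =>
      simpa [postsTo, postKey, List.filterMap_cons] using ih
    | get h0 mid mid' m q hc hq =>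
      simpa [postsTo, postKey, List.filterMap_cons] using ih
    | post h0 mid h' m rest hc =>
      obtain ⟨ihb, ihc⟩ := ih
      rw [postsTo_cons_post]
      by_cases hh : h' = h
      · rw [if_pos hh]
        refine ⟨?_, List.isChain_cons.2 ⟨?_, ihc⟩⟩
        · intro m' hm'
          rcases List.mem_cons.1 hm' with rfl | hm'
          · exact le_refl _
          · exact le_trans (Nat.le_succ _) (ihb m' hm')
        · intro b hb
          exact lt_of_lt_of_le (Nat.lt_succ_self _) (ihb b (List.mem_of_mem_head? hb))
      · rw [if_neg hh]
        exact ⟨fun m' hm' => le_trans (Nat.le_succ _) (ihb m' hm'), ihc⟩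


/-! ### evAt utilities -/

lemma evAt_eq_getElem {l : List REvent} {i : ℕ} (h : i < l.length) :
    evAt l i = l[i] := by
  simp [evAt, List.getD_eq_getElem?_getD, List.getElem?_eq_getElem h]

lemma evAt_take {l : List REvent} {n i : ℕ} (h : i < n) :
    evAt (l.take n) i = evAt l i := by
  simp [evAt, List.getD_eq_getElem?_getD, List.getElem?_take_of_lt h]

lemma evAt_drop (l : List REvent) (n i : ℕ) :
    evAt (l.drop n) i = evAt l (n + i) := by
  simp [evAt, List.getD_eq_getElem?_getD, List.getElem?_drop]

/-! ### Pairwise facts about the gets of a handler -/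

lemma gets_prefix {P : Program} {ρ : List REvent} {cf : Config}
    (hst : Steps (initConfig P) ρ cf) (h : ℕ) :
    getsOf h ρ ++ (cf.mbox h).map Prod.fst = postsTo h ρ := by
  have := fifo hst h
  simpa [initConfig] using this

lemma posts_pairwise {P : Program} {ρ : List REvent} {cf : Config}
    (hst : Steps (initConfig P) ρ cf) (h : ℕ) :
    (postsTo h ρ).Pairwise (· < ·) :=
  List.isChain_iff_pairwise.1 (posts_chain hst h).2

lemma gets_pairwise {P : Program} {ρ : List REvent} {cf : Config}
    (hst : Steps (initConfig P) ρ cf) (h : ℕ) :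
    (getsOf h ρ).Pairwise (· < ·) :=
  List.Pairwise.sublist (List.IsPrefix.sublist ⟨_, gets_prefix hst h⟩)
    (posts_pairwise hst h)

lemma mem_getsOf {l : List REvent} {i h : ℕ} (hi : i < l.length)
    (hl : (evAt l i).lbl = .get h) : (evAt l i).mid ∈ getsOf h l := by
  refine List.mem_filterMap.2 ⟨evAt l i, ?_, ?_⟩
  · rw [evAt_eq_getElem hi]
    exact List.getElem_mem hi
  · simp [getKey, hl]

lemma mem_postsTo_of_mem_getsOf {P : Program} {ρ : List REvent} {cf : Config}
    (hst : Steps (initConfig P) ρ cf) {h m : ℕ} (hm : m ∈ getsOf h ρ) :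
    m ∈ postsTo h ρ := by
  rw [← gets_prefix hst h]
  exact List.mem_append_left _ hm

lemma postsTo_elim {l : List REvent} {h m : ℕ} (hm : m ∈ postsTo h l) :
    ∃ k, k < l.length ∧ (∃ h₀, (evAt l k).lbl = .post h₀ h) ∧
      (evAt l k).posted = m := by
  obtain ⟨e, he, hfe⟩ := List.mem_filterMap.1 hm
  obtain ⟨k, hk, hek⟩ := List.mem_iff_getElem.1 he
  refine ⟨k, hk, ?_⟩
  have hev : evAt l k = e := by rw [evAt_eq_getElem hk, hek]
  rw [hev]
  cases hle : e.lbl with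
  | post h0 h' =>
    simp only [postKey, hle] at hfe
    by_cases hh : h' = h
    · subst hh
      rw [if_pos rfl] at hfe
      cases hfe
      exact ⟨⟨h0, rfl⟩, rfl⟩
    · rw [if_neg hh] at hfe
      cases hfe
  | read h0 x => simp [postKey, hle] at hfe
  | write h0 x v => simp [postKey, hle] at hfe
  | get h0 => simp [postKey, hle] at hfe

lemma posted_inj {c : Config} {l : List REvent} {c' : Config} (hs : Steps c l c')
    {i j : ℕ} (hi : i < l.length) (hj : j < l.length)
    (hpi : (evAt l i).lbl.IsPost) (hpj : (evAt l j).lbl.IsPost)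
    (heq : (evAt l i).posted = (evAt l j).posted) : i = j := by
  rcases lt_trichotomy i j with hlt | h | hlt
  · exact absurd heq (ne_of_lt (posted_lt hs i j hlt hj hpi hpj))
  · exact h
  · exact absurd heq.symm (ne_of_lt (posted_lt hs j i hlt hi hpj hpi))

lemma gets_mono {l : List REvent} {h : ℕ} (hpw : (getsOf h l).Pairwise (· < ·))
    {i j : ℕ} (hij : i < j) (hj : j < l.length)
    (hli : (evAt l i).lbl = .get h) (hlj : (evAt l j).lbl = .get h) :
    (evAt l i).mid < (evAt l j).mid := by
  have hi : i < l.length := lt_trans hij hj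
  have hsplit : getsOf h l = getsOf h (l.take (i+1)) ++ getsOf h (l.drop (i+1)) := by
    rw [getsOf, getsOf, getsOf, ← List.filterMap_append, List.take_append_drop]
  have hlen : i < (l.take (i+1)).length := by
    rw [List.length_take]; omega
  have he1 : evAt (l.take (i+1)) i = evAt l i := evAt_take (Nat.lt_succ_self i)
  have h1 : (evAt l i).mid ∈ getsOf h (l.take (i+1)) := by
    have := mem_getsOf hlen (by rw [he1]; exact hli)
    rwa [he1] at this
  have hlen2 : j - (i+1) < (l.drop (i+1)).length := by
    rw [List.length_drop]; omega
  have he2 : evAt (l.drop (i+1)) (j - (i+1)) = evAt l j := by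
    rw [evAt_drop]
    congr 1
    omega
  have h2 : (evAt l j).mid ∈ getsOf h (l.drop (i+1)) := by
    have := mem_getsOf hlen2 (by rw [he2]; exact hlj)
    rwa [he2] at this
  have hpw' := hsplit ▸ hpw
  exact (List.pairwise_append.1 hpw').2.2 _ h1 _ h2

lemma gets_inj {P : Program} {ρ : List REvent} {cf : Config}
    (hst : Steps (initConfig P) ρ cf) {i j h : ℕ}
    (hi : i < ρ.length) (hj : j < ρ.length)
    (hli : (evAt ρ i).lbl = .get h) (hlj : (evAt ρ j).lbl = .get h)
    (hm : (evAt ρ i).mid = (evAt ρ j).mid) : i = j := by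
  have hpw := gets_pairwise hst h
  rcases lt_trichotomy i j with hlt | heq | hlt
  · exact absurd hm (ne_of_lt (gets_mono hpw hlt hj hli hlj))
  · exact heq
  · exact absurd hm.symm (ne_of_lt (gets_mono hpw hlt hi hlj hli))

lemma get_handler_eq {P : Program} {ρ : List REvent} {cf : Config}
    (hst : Steps (initConfig P) ρ cf) {i j h₁ h₂ : ℕ}
    (hi : i < ρ.length) (hj : j < ρ.length)
    (hli : (evAt ρ i).lbl = .get h₁) (hlj : (evAt ρ j).lbl = .get h₂)
    (hm : (evAt ρ i).mid = (evAt ρ j).mid) : h₁ = h₂ := by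
  obtain ⟨k₁, hk₁, ⟨a₁, hl₁⟩, hp₁⟩ :=
    postsTo_elim (mem_postsTo_of_mem_getsOf hst (mem_getsOf hi hli))
  obtain ⟨k₂, hk₂, ⟨a₂, hl₂⟩, hp₂⟩ :=
    postsTo_elim (mem_postsTo_of_mem_getsOf hst (mem_getsOf hj hlj))
  have hk : k₁ = k₂ := by
    refine posted_inj hst hk₁ hk₂ ⟨a₁, h₁, hl₁⟩ ⟨a₂, h₂, hl₂⟩ ?_
    rw [hp₁, hp₂, hm]
  rw [hk, hl₂] at hl₁
  injection hl₁ with _ hh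
  exact hh.symm

/-! ### Current-message lemmas -/

lemma step_cur_ne {c e c'} (hs : Step c e c') {h' : ℕ} (hne : h' ≠ e.lbl.hnd) :
    c'.cur h' = c.cur h' := by
  cases hs <;>
    simp_all [EventLabel.hnd, Function.update_of_ne hne]

lemma step_cur_instr {c e c'} (hs : Step c e c') (hng : ¬ e.lbl.IsGet) {m : ℕ}
    {r : Msg} (hc : c'.cur e.lbl.hnd = some (m, r)) :
    ∃ r', c.cur e.lbl.hnd = some (m, r') := by
  cases hs with
  | read h mid x rest hcc =>
    simp only [EventLabel.hnd, Function.update_self] at hc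
    cases hc
    exact ⟨_, hcc⟩
  | write h mid x v rest hcc =>
    simp only [EventLabel.hnd, Function.update_self] at hc
    cases hc
    exact ⟨_, hcc⟩
  | post h mid h' mm rest hcc =>
    simp only [EventLabel.hnd, Function.update_self] at hc
    cases hc
    exact ⟨_, hcc⟩
  | get h mid mid' mm q hcc hqq =>
    exact absurd ⟨h, rfl⟩ hng

lemma step_cur_get {c e c'} (hs : Step c e c') (hg : e.lbl.IsGet) :
    ∃ r, c'.cur e.lbl.hnd = some (e.mid, r) := by
  cases hs with
  | read h mid x rest hcc => obtain ⟨h', hh⟩ := hg; cases hh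
  | write h mid x v rest hcc => obtain ⟨h', hh⟩ := hg; cases hh
  | post h mid h' mm rest hcc => obtain ⟨h'', hh⟩ := hg; cases hh
  | get h mid mid' mm q hcc hqq =>
    exact ⟨mm, by simp [EventLabel.hnd, Function.update_self]⟩

/-- The mid of a non-get event either is the mid of the initial current
message of its handler (and no earlier get of that handler exists), or is
the mid of the most recent get of its handler. -/
lemma cm3 {c : Config} {l : List REvent} {c' : Config} (hs : Steps c l c') :
    ∀ i < l.length, ¬ (evAt l i).lbl.IsGet →
    ((∃ rest, c.cur ((evAt l i).lbl.hnd) = some ((evAt l i).mid, rest)) ∧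
        ∀ k < i, (evAt l k).lbl ≠ .get ((evAt l i).lbl.hnd)) ∨
    (∃ j < i, (evAt l j).lbl = .get ((evAt l i).lbl.hnd) ∧
        (evAt l j).mid = (evAt l i).mid ∧
        ∀ k, j < k → k < i → (evAt l k).lbl ≠ .get ((evAt l i).lbl.hnd)) := by
  induction hs with
  | nil => intro i hi; simp at hi
  | @cons c0 c1 c2 e ll h1 h2 ih =>
    intro i hi hng
    cases i with
    | zero =>
      left
      simp only [evAt_cons_zero] at hng ⊢
      refine ⟨?_, fun k hk => absurd hk (Nat.not_lt_zero k)⟩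
      cases h1 with
      | read h mid x rest hcc => exact ⟨_, hcc⟩
      | write h mid x v rest hcc => exact ⟨_, hcc⟩
      | post h mid h' mm rest hcc => exact ⟨_, hcc⟩
      | get h mid mid' mm q hcc hqq => exact absurd ⟨h, rfl⟩ hng
    | succ n =>
      have hn : n < ll.length := by simpa using hi
      have hng' : ¬ (evAt ll n).lbl.IsGet := by simpa only [evAt_cons_succ] using hng
      simp only [evAt_cons_succ] at hng ⊢
      rcases ih n hn hng' with ⟨⟨rest, hcur⟩, hnoget⟩ | ⟨j, hj, hjl, hjm, hnog⟩
      · by_cases hge : e.lbl = .get ((evAt ll n).lbl.hnd)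
        · right
          obtain ⟨r, hr⟩ := step_cur_get h1 ⟨_, hge⟩
          rw [hge] at hr
          have hr2 : c1.cur ((evAt ll n).lbl.hnd) = some (e.mid, r) := hr
          rw [hcur] at hr2
          have hmid : e.mid = (evAt ll n).mid := by
            injection hr2 with hr'
            exact (congrArg Prod.fst hr').symm
          refine ⟨0, Nat.succ_pos n, ?_, ?_, ?_⟩
          · simpa only [evAt_cons_zero] using hge
          · simpa only [evAt_cons_zero] using hmid
          · intro k hk1 hk2
            cases k with
            | zero => omega
            | succ m =>
              simp only [evAt_cons_succ]
              exact hnoget m (by omega)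
        · left
          constructor
          · by_cases hhe : e.lbl.hnd = (evAt ll n).lbl.hnd
            · have hnge : ¬ e.lbl.IsGet := by
                rintro ⟨hx, hlx⟩
                apply hge
                rw [hlx] at hhe ⊢
                exact congrArg EventLabel.get hhe
              obtain ⟨r', hr'⟩ := step_cur_instr h1 hnge (by rw [hhe]; exact hcur)
              exact ⟨r', by rw [← hhe]; exact hr'⟩
            · rw [← step_cur_ne h1 (fun hx => hhe hx.symm)]
              exact ⟨rest, hcur⟩
          · intro k hk
            cases k with
            | zero => simpa only [evAt_cons_zero] using hge
            | succ m =>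
              simp only [evAt_cons_succ]
              exact hnoget m (by omega)
      · right
        refine ⟨j + 1, by omega, by simpa only [evAt_cons_succ] using hjl,
          by simpa only [evAt_cons_succ] using hjm, ?_⟩
        intro k hk1 hk2
        cases k with
        | zero => omega
        | succ m =>
          simp only [evAt_cons_succ]
          exact hnog m (by omega) (by omega)

/-! ### Serial execution of the messages of a handler -/

lemma no_late_mid {P : Program} {ρ : List REvent} {cf : Config}
    (hst : Steps (initConfig P) ρ cf) {g g' i h : ℕ}
    (hgg' : g < g') (hg'i : g' < i) (hi : i < ρ.length)
    (hlg : (evAt ρ g).lbl = .get h) (hlg' : (evAt ρ g').lbl = .get h)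
    (hm : (evAt ρ i).mid = (evAt ρ g).mid) : False := by
  have hg : g < ρ.length := by omega
  have hg'lt : g' < ρ.length := by omega
  by_cases hgi : (evAt ρ i).lbl.IsGet
  · obtain ⟨h₂, hl2⟩ := hgi
    have hh : h₂ = h := get_handler_eq hst hi hg hl2 hlg hm
    rw [hh] at hl2
    have : i = g := gets_inj hst hi hg hl2 hlg hm
    omega
  · rcases cm3 hst i hi hgi with ⟨⟨rest, hcur⟩, _⟩ | ⟨j, hji, hjl, hjm, hnog⟩
    · have hinit : (initConfig P).cur ((evAt ρ i).lbl.hnd) =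
          if (evAt ρ i).lbl.hnd < P.numHandlers
          then some ((evAt ρ i).lbl.hnd, P.init ((evAt ρ i).lbl.hnd))
          else none := rfl
      rw [hinit] at hcur
      split at hcur
      case _ hlt =>
        injection hcur with hcur'
        have hmid : (evAt ρ i).mid = (evAt ρ i).lbl.hnd :=
          (congrArg Prod.fst hcur').symm
        obtain ⟨k, hk, ⟨h₀, hkl⟩, hkp⟩ :=
          postsTo_elim (mem_postsTo_of_mem_getsOf hst (mem_getsOf hg hlg))
        have hge2 : (initConfig P).fresh ≤ (evAt ρ k).posted :=
          posted_ge hst k hk ⟨h₀, h, hkl⟩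
        have hnum : P.numHandlers ≤ (evAt ρ g).mid := by
          rw [← hkp]; exact hge2
        omega
      case _ => cases hcur
    · have hjlen : j < ρ.length := by omega
      have hmj : (evAt ρ j).mid = (evAt ρ g).mid := by rw [hjm, hm]
      have hh2 : (evAt ρ i).lbl.hnd = h := get_handler_eq hst hjlen hg hjl hlg hmj
      rw [hh2] at hjl hnog
      have hjg : j = g := gets_inj hst hjlen hg hjl hlg hmj
      exact hnog g' (by omega) hg'i hlg'

/-! ### Trace-level lemmas -/

lemma rtg_po {ρ : List REvent} {a b : ℕ}
    (h : Relation.ReflTransGen ((traceOf ρ).rel .po) a b) :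
    a = b ∨ (a < b ∧ b < ρ.length ∧ (evAt ρ a).mid = (evAt ρ b).mid) := by
  induction h with
  | refl => exact Or.inl rfl
  | tail hab hbc ih =>
    obtain ⟨h1, h2, h3⟩ := hbc
    rcases ih with rfl | ⟨g1, g2, g3⟩
    · exact Or.inr ⟨h1, h2, h3⟩
    · exact Or.inr ⟨lt_trans g1 h1, h2, g3.trans h3⟩

lemma qo_eo {P : Program} {ρ : List REvent} {cf : Config}
    (hst : Steps (initConfig P) ρ cf) {a b : ℕ}
    (hqo : (traceOf ρ).qo a b) : (traceOf ρ).rel .eo a b := by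
  obtain ⟨p, q, hpb1, hpb2, hmo⟩ := hqo
  obtain ⟨hpa, halen, hppost, haget, hpm⟩ := hpb1
  obtain ⟨hqb, hblen, hqpost, hbget, hqm⟩ := hpb2
  obtain ⟨hpq, hqlen, h', ⟨p0, hpl⟩, ⟨q0, hql⟩⟩ := hmo
  have hplen : p < ρ.length := lt_trans hpq hqlen
  have hmidlt : (evAt ρ a).mid < (evAt ρ b).mid := by
    rw [← hpm, ← hqm]
    exact posted_lt hst p q hpq hqlen hppost hqpost
  obtain ⟨ha, hal⟩ := haget
  obtain ⟨hb, hbl⟩ := hbget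
  have hha : ha = h' := by
    obtain ⟨k, hk, ⟨h₀, hkl⟩, hkp⟩ :=
      postsTo_elim (mem_postsTo_of_mem_getsOf hst (mem_getsOf halen hal))
    have hkeq : k = p :=
      posted_inj hst hk hplen ⟨h₀, ha, hkl⟩ hppost (by rw [hkp, hpm])
    rw [hkeq, hpl] at hkl
    injection hkl with _ hh
    exact hh.symm
  have hhb : hb = h' := by
    obtain ⟨k, hk, ⟨h₀, hkl⟩, hkp⟩ :=
      postsTo_elim (mem_postsTo_of_mem_getsOf hst (mem_getsOf hblen hbl))
    have hkeq : k = q :=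
      posted_inj hst hk hqlen ⟨h₀, hb, hkl⟩ hqpost (by rw [hkp, hqm])
    rw [hkeq, hql] at hkl
    injection hkl with _ hh
    exact hh.symm
  have hal' : (evAt ρ a).lbl = .get h' := by rw [hal, hha]
  have hbl' : (evAt ρ b).lbl = .get h' := by rw [hbl, hhb]
  have hlt : a < b := by
    rcases lt_trichotomy a b with hh | hh | hh
    · exact hh
    · exact absurd (hh ▸ hmidlt) (lt_irrefl _)
    · exact absurd hmidlt
        (not_lt_of_gt (gets_mono (gets_pairwise hst h') hh halen hbl' hal'))
  exact ⟨hlt, hblen, h', hal', hbl'⟩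

lemma qo_lt {P : Program} {ρ : List REvent} {cf : Config}
    (hst : Steps (initConfig P) ρ cf) {a b : ℕ}
    (hqo : (traceOf ρ).qo a b) : a < b :=
  (qo_eo hst hqo).1

lemma step_lt {P : Program} {ρ : List REvent} {cf : Config}
    (hst : Steps (initConfig P) ρ cf) {a b : ℕ}
    (h : (traceOf ρ).step a b) : a < b := by
  rcases h with hpo | hrf | hfr | hco | hpb | hmo | heod | hqo
  · exact hpo.1
  · exact hrf.1
  · obtain ⟨w, hrf, hco⟩ := hfr
    obtain ⟨hwa, halen, x, hwx, hax, hnow⟩ := hrf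
    obtain ⟨hwb, hblen, x', hwx', hbx'⟩ := hco
    obtain ⟨h1, v1, e1⟩ := hwx
    obtain ⟨h2, v2, e2⟩ := hwx'
    rw [e1] at e2
    injection e2 with _ hx _
    rcases lt_trichotomy a b with hh | hh | hh
    · exact hh
    · exfalso
      obtain ⟨h3, e3⟩ := hax
      obtain ⟨h4, v4, e4⟩ := hbx'
      rw [← hh, e3] at e4
      cases e4
    · exact absurd (by rw [hx]; exact hbx') (hnow b hwb hh)
  · exact hco.1
  · exact hpb.1
  · exact hmo.1
  · obtain ⟨g, g', ⟨hgget, hpo1⟩, ⟨hg'get, hpo2⟩, heo⟩ := heod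
    obtain ⟨hgg', hg'len, hh0, hlg, hlg'⟩ := heo
    have hag' : a < g' := by
      rcases rtg_po hpo1 with rfl | ⟨hga, halen, hma⟩
      · exact hgg'
      · rcases lt_trichotomy a g' with hh | hh | hh
        · exact hh
        · exfalso
          have : g = g' := gets_inj hst (lt_trans hgg' hg'len) hg'len hlg hlg'
            (by rw [hma, hh])
          omega
        · exact absurd (no_late_mid hst hgg' hh halen hlg hlg' hma.symm) not_false
    rcases rtg_po hpo2 with rfl | ⟨hg'b, _, _⟩
    · exact hag'
    · exact lt_trans hag' hg'b
  · exact qo_lt hst hqo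

lemma hb_lt {P : Program} {ρ : List REvent} {cf : Config}
    (hst : Steps (initConfig P) ρ cf) {a b : ℕ}
    (h : (traceOf ρ).hb a b) : a < b := by
  induction h with
  | single hs => exact step_lt hst hs
  | tail _ hs ih => exact lt_trans ih (step_lt hst hs)

end Statement3Aux
/-- For every execution `ρ` of an event-driven program and
all get events `g₁, g₂` of the same handler in the induced trace `τ(ρ)`:
if `g₁ qo g₂` then `g₁ eo g₂`; in particular `τ(ρ)` contains no pair of get
events with `g₁ qo g₂` and `g₂ hb g₁`. -/
theorem statement3 (P : Program) (ρ : List REvent) (hexec : IsExec P ρ)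
    (g₁ g₂ : ℕ) (hg₁ : g₁ ∈ (traceOf ρ).E) (hg₂ : g₂ ∈ (traceOf ρ).E)
    (hget₁ : ((traceOf ρ).lbl g₁).IsGet) (hget₂ : ((traceOf ρ).lbl g₂).IsGet)
    (hsame : ((traceOf ρ).lbl g₁).hnd = ((traceOf ρ).lbl g₂).hnd) :
    ((traceOf ρ).qo g₁ g₂ → (traceOf ρ).rel .eo g₁ g₂) ∧
    ¬ ((traceOf ρ).qo g₁ g₂ ∧ (traceOf ρ).hb g₂ g₁) := by
  obtain ⟨cf, hst⟩ := hexec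
  refine ⟨fun hqo => Statement3Aux.qo_eo hst hqo, ?_⟩
  rintro ⟨hqo, hhb⟩
  have h1 : g₁ < g₂ := Statement3Aux.qo_lt hst hqo
  have h2 : g₂ < g₁ := Statement3Aux.hb_lt hst hhb
  omega
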